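/- Let X be a real Hilbert space and let N : X → X be a continuous linear operator with N* = −N and N² = −Id. Let λ ∈ [0,1), set T_λ = (1 − λ)Id + λN and A_λ = (T_λ)⁻¹ − Id. Then: (i) N is nonexpansive (indeed an isometry); (ii) A_λ = (λ/((1 − λ)² + λ²))·((1 − 2λ)Id − N); (iii) for all x ∈ X, ⟨x, A_λ x⟩ = (λ(1 − 2λ)/((1 − λ)² + λ²))‖x‖², so A_λ is ρ-monotone with ρ = λ(1 − 2λ)/(λ² + (1 − λ)²); and (iv) for λ > 0 and all x ∈ X, ⟨x, A_λ x⟩ = ((1 − 2λ)/(2λ))‖A_λ x‖², so A_λ is ρ-comonotone with ρ = (1 − 2λ)/(2λ). -/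
import Mathlib


open RealInnerProductSpace

variable {X : Type*} [NormedAddCommGroup X] [InnerProductSpace ℝ X] [CompleteSpace X]

theorem stmt18 (N : X →L[ℝ] X) (hadj : ContinuousLinearMap.adjoint N = -N)
    (hN2 : ∀ x : X, N (N x) = -x) (lam : ℝ) (h0 : 0 ≤ lam) (h1 : lam < 1)
    (T : X → X) (hT : ∀ x : X, T x = (1 - lam) • x + lam • N x)
    -- `Alam = (T)⁻¹ - Id`, i.e. `Id + Alam` is the inverse of `T`
    (Alam : X → X) (hA1 : ∀ x : X, T (x + Alam x) = x)
    (hA2 : ∀ x : X, T x + Alam (T x) = x) :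
    -- (i) N is nonexpansive, indeed an isometry
    (∀ x y : X, ‖N x - N y‖ ≤ ‖x - y‖) ∧ (∀ x : X, ‖N x‖ = ‖x‖) ∧
    -- (ii) the explicit formula for Alam
    (∀ x : X, Alam x =
      (lam / ((1 - lam) ^ 2 + lam ^ 2)) • ((1 - 2 * lam) • x - N x)) ∧
    -- (iii) Alam is ρ-monotone with ρ = lam (1 - 2 lam) / (lam² + (1 - lam)²)
    (∀ x : X, ⟪x, Alam x⟫ = (lam * (1 - 2 * lam) / ((1 - lam) ^ 2 + lam ^ 2)) * ‖x‖ ^ 2) ∧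
    (∀ x y : X, (lam * (1 - 2 * lam) / (lam ^ 2 + (1 - lam) ^ 2)) * ‖x - y‖ ^ 2 ≤
      ⟪x - y, Alam x - Alam y⟫) ∧
    -- (iv) for lam > 0, Alam is ρ-comonotone with ρ = (1 - 2 lam) / (2 lam)
    (0 < lam →
      (∀ x : X, ⟪x, Alam x⟫ = ((1 - 2 * lam) / (2 * lam)) * ‖Alam x‖ ^ 2) ∧
      ∀ x y : X, ((1 - 2 * lam) / (2 * lam)) * ‖Alam x - Alam y‖ ^ 2 ≤
        ⟪x - y, Alam x - Alam y⟫) := by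
  have hD : (0:ℝ) < (1 - lam) ^ 2 + lam ^ 2 := by
    have : (0:ℝ) < 1 - lam := by linarith
    positivity
  have hDne : ((1 - lam) ^ 2 + lam ^ 2 : ℝ) ≠ 0 := ne_of_gt hD
  obtain ⟨c, hc⟩ : ∃ c : ℝ, c = lam / ((1 - lam) ^ 2 + lam ^ 2) := ⟨_, rfl⟩
  -- skew-adjointness consequences
  have hsw : ∀ x y : X, ⟪N x, y⟫ = -⟪x, N y⟫ := by
    intro x y
    have := ContinuousLinearMap.adjoint_inner_right (𝕜 := ℝ) N x y
    rw [hadj] at this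
    simpa [inner_neg_right] using this.symm
  have hskew : ∀ x : X, ⟪x, N x⟫ = 0 := by
    intro x
    have h := hsw x x
    rw [real_inner_comm] at h
    linarith
  have hNN : ∀ x y : X, ⟪N x, N y⟫ = ⟪x, y⟫ := by
    intro x y
    have := hsw x (N y)
    rw [hN2, inner_neg_right] at this
    linarith
  have hiso : ∀ x : X, ‖N x‖ = ‖x‖ := by
    intro x
    have h := hNN x x
    rw [real_inner_self_eq_norm_sq, real_inner_self_eq_norm_sq] at h
    rw [← Real.sqrt_sq (norm_nonneg (N x)), h, Real.sqrt_sq (norm_nonneg x)]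
  -- injectivity of T
  have hinj : Function.Injective T := by
    intro u v huv
    have := hA2 u
    rw [huv, hA2 v] at this
    exact this.symm
  -- formula for Alam
  have hform : ∀ x : X, Alam x = c • ((1 - 2 * lam) • x - N x) := by
    intro x
    have key : T (x + c • ((1 - 2 * lam) • x - N x)) = x := by
      rw [hT]
      simp only [map_add, map_smul, map_sub, hN2]
      have hDne' : (1 - lam * 2 + lam ^ 2 * 2 : ℝ) ≠ 0 := by
        have h' : (1 - lam * 2 + lam ^ 2 * 2 : ℝ) = (1 - lam) ^ 2 + lam ^ 2 := by ring
        rw [h']; exact hDne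
      match_scalars
      · rw [hc]
        field_simp
        ring
      · rw [hc]
        field_simp
        ring
    have h2 : T (x + Alam x) = T (x + c • ((1 - 2 * lam) • x - N x)) := by
      rw [hA1, key]
    have := hinj h2
    exact add_left_cancel this
  have hlin : ∀ x y : X, Alam x - Alam y = c • ((1 - 2 * lam) • (x - y) - N (x - y)) := by
    intro x y
    rw [hform, hform, map_sub]
    module
  -- inner products
  have hinner : ∀ x : X, ⟪x, Alam x⟫ = c * (1 - 2 * lam) * ‖x‖ ^ 2 := by
    intro x
    rw [hform]
    rw [real_inner_smul_right, inner_sub_right, real_inner_smul_right, hskew,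
      real_inner_self_eq_norm_sq]
    ring
  have hnormA : ∀ x : X, ‖Alam x‖ ^ 2 = c ^ 2 * ((1 - 2 * lam) ^ 2 + 1) * ‖x‖ ^ 2 := by
    intro x
    rw [← real_inner_self_eq_norm_sq, hform]
    rw [real_inner_smul_left, real_inner_smul_right, inner_sub_left, inner_sub_right,
      inner_sub_right, real_inner_smul_left, real_inner_smul_left, real_inner_smul_right,
      real_inner_smul_right, hskew, hNN, real_inner_self_eq_norm_sq]
    have : ⟪N x, x⟫ = (0:ℝ) := by rw [real_inner_comm]; exact hskew x
    rw [this]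
    ring
  refine ⟨?_, hiso, ?_, ?_, ?_, ?_⟩
  · intro x y
    rw [← map_sub, hiso]
  · intro x; rw [hform, hc]
  · intro x
    rw [hinner]
    rw [hc]; ring
  · intro x y
    have : ⟪x - y, Alam x - Alam y⟫ = c * (1 - 2 * lam) * ‖x - y‖ ^ 2 := by
      rw [hlin]
      rw [real_inner_smul_right, inner_sub_right, real_inner_smul_right, hskew,
        real_inner_self_eq_norm_sq]
      ring
    rw [this, hc]
    have : lam * (1 - 2 * lam) / (lam ^ 2 + (1 - lam) ^ 2) =
        lam / ((1 - lam) ^ 2 + lam ^ 2) * (1 - 2 * lam) := by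
      rw [add_comm (lam ^ 2)]; field_simp
    rw [this]
  · intro hl
    have hkey : ∀ x : X, ⟪x, Alam x⟫ = (1 - 2 * lam) / (2 * lam) * ‖Alam x‖ ^ 2 := by
      intro x
      rw [hinner, hnormA, hc]
      field_simp
      ring
    refine ⟨hkey, ?_⟩
    intro x y
    have h1 : ⟪x - y, Alam x - Alam y⟫ = c * (1 - 2 * lam) * ‖x - y‖ ^ 2 := by
      rw [hlin, real_inner_smul_right, inner_sub_right, real_inner_smul_right, hskew,
        real_inner_self_eq_norm_sq]
      ring
    have h2 : ‖Alam x - Alam y‖ ^ 2 = c ^ 2 * ((1 - 2 * lam) ^ 2 + 1) * ‖x - y‖ ^ 2 := by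
      rw [← real_inner_self_eq_norm_sq, hlin]
      rw [real_inner_smul_left, real_inner_smul_right, inner_sub_left, inner_sub_right,
        inner_sub_right, real_inner_smul_left, real_inner_smul_left, real_inner_smul_right,
        real_inner_smul_right, hskew, hNN, real_inner_self_eq_norm_sq]
      have : ⟪N (x - y), x - y⟫ = (0:ℝ) := by rw [real_inner_comm]; exact hskew _
      rw [this]
      ring
    rw [h1, h2, hc]
    have : (1 - 2 * lam) / (2 * lam) *
        ((lam / ((1 - lam) ^ 2 + lam ^ 2)) ^ 2 * ((1 - 2 * lam) ^ 2 + 1) * ‖x - y‖ ^ 2) =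
        lam / ((1 - lam) ^ 2 + lam ^ 2) * (1 - 2 * lam) * ‖x - y‖ ^ 2 := by
      field_simp
      ring
    rw [this]
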